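/- Let I ⊆ ℝ be an open interval, let V, W : I → ℝ be differentiable, let x̃ : I → ℝⁿ, let α : I → ℝ with α(t) ≥ 0, and let A, γ̄, c̄₂, c̄₃ > 0 be constants such that for all t ∈ I: 0 < W(t) ≤ c̄₂‖x̃(t)‖², V′(t) ≤ −α(t) + A·γ̄·‖x̃(t)‖, and W′(t) ≤ −c̄₃‖x̃(t)‖². Then for every λ > 0, the function V_c := V + λ·√W is differentiable on I and satisfies V_c′(t) ≤ −α(t) − (c̄₃·λ/(2√c̄₂) − A·γ̄)·‖x̃(t)‖ for all t ∈ I. In particular, if λ > 2√c̄₂·A·γ̄/c̄₃, then V_c′(t) ≤ −α(t) − δ‖x̃(t)‖ for some δ > 0. -/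

import Mathlib

/-- composite Lyapunov function computation. On an open interval `I`, if
`0 < W ≤ c̄₂‖xt‖²`, `V' ≤ −α + A·γ̄·‖xt‖`, and `W' ≤ −c̄₃‖xt‖²`, then for every `λ > 0`
the function `V_c = V + λ√W` is differentiable on `I` with
`V_c' ≤ −α − (c̄₃λ/(2√c̄₂) − A·γ̄)‖xt‖`; in particular if `λ > 2√c̄₂·A·γ̄/c̄₃` then
`V_c' ≤ −α − δ‖xt‖` for some `δ > 0`. -/
theorem statement13 (n : ℕ) (I : Set ℝ) (hIopen : IsOpen I) (hIconn : I.OrdConnected)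
    (V W : ℝ → ℝ) (xt : ℝ → EuclideanSpace ℝ (Fin n)) (α : ℝ → ℝ)
    (A γbar c₂ c₃ : ℝ) (hA : 0 < A) (hγ : 0 < γbar) (hc₂ : 0 < c₂) (hc₃ : 0 < c₃)
    (hVdiff : ∀ t ∈ I, DifferentiableAt ℝ V t)
    (hWdiff : ∀ t ∈ I, DifferentiableAt ℝ W t)
    (hα : ∀ t ∈ I, 0 ≤ α t)
    (hWpos : ∀ t ∈ I, 0 < W t)
    (hWub : ∀ t ∈ I, W t ≤ c₂ * ‖xt t‖ ^ 2)
    (hV' : ∀ t ∈ I, deriv V t ≤ -α t + A * γbar * ‖xt t‖)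
    (hW' : ∀ t ∈ I, deriv W t ≤ -c₃ * ‖xt t‖ ^ 2) :
    ∀ lam : ℝ, 0 < lam →
      ((∀ t ∈ I, DifferentiableAt ℝ (fun s => V s + lam * Real.sqrt (W s)) t ∧
          deriv (fun s => V s + lam * Real.sqrt (W s)) t ≤
            -α t - (c₃ * lam / (2 * Real.sqrt c₂) - A * γbar) * ‖xt t‖) ∧
        (2 * Real.sqrt c₂ * A * γbar / c₃ < lam →
          ∃ δ : ℝ, 0 < δ ∧ ∀ t ∈ I,
            deriv (fun s => V s + lam * Real.sqrt (W s)) t ≤ -α t - δ * ‖xt t‖)) := by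
  intro lam hlam
  have hc₂s : 0 < Real.sqrt c₂ := Real.sqrt_pos.mpr hc₂
  have key : ∀ t ∈ I, DifferentiableAt ℝ (fun s => V s + lam * Real.sqrt (W s)) t ∧
      deriv (fun s => V s + lam * Real.sqrt (W s)) t ≤
        -α t - (c₃ * lam / (2 * Real.sqrt c₂) - A * γbar) * ‖xt t‖ := by
    intro t ht
    have hWt := hWpos t ht
    have hx : 0 < ‖xt t‖ := by
      by_contra h
      push_neg at h
      nlinarith [hWub t ht, hWt, norm_nonneg (xt t), mul_nonneg (norm_nonneg (xt t)) (neg_nonneg.mpr h)]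
    have hsW : 0 < Real.sqrt (W t) := Real.sqrt_pos.mpr hWt
    have hsle : Real.sqrt (W t) ≤ Real.sqrt c₂ * ‖xt t‖ := by
      have := Real.sqrt_le_sqrt (hWub t ht)
      rwa [Real.sqrt_mul hc₂.le, Real.sqrt_sq hx.le] at this
    have hderiv : HasDerivAt (fun s => V s + lam * Real.sqrt (W s))
        (deriv V t + lam * (1 / (2 * Real.sqrt (W t)) * deriv W t)) t := by
      have h1 := (hVdiff t ht).hasDerivAt
      have h2 : HasDerivAt (fun s => Real.sqrt (W s))
          (1 / (2 * Real.sqrt (W t)) * deriv W t) t :=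
        (Real.hasDerivAt_sqrt hWt.ne').comp t (hWdiff t ht).hasDerivAt
      exact h1.add (h2.const_mul lam)
    refine ⟨hderiv.differentiableAt, ?_⟩
    rw [hderiv.deriv]
    have hW't := hW' t ht
    have hV't := hV' t ht
    have step1 : lam * (1 / (2 * Real.sqrt (W t)) * deriv W t) ≤
        lam * (1 / (2 * Real.sqrt (W t)) * (-c₃ * ‖xt t‖ ^ 2)) := by
      have h0 : 0 ≤ 1 / (2 * Real.sqrt (W t)) := by positivity
      have := mul_le_mul_of_nonneg_left hW't h0
      nlinarith
    have step2 : lam * (1 / (2 * Real.sqrt (W t)) * (-c₃ * ‖xt t‖ ^ 2)) ≤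
        -(c₃ * lam / (2 * Real.sqrt c₂)) * ‖xt t‖ := by
      have e1 : lam * (1 / (2 * Real.sqrt (W t)) * (-c₃ * ‖xt t‖ ^ 2)) =
          -(lam * c₃ * ‖xt t‖ ^ 2 / (2 * Real.sqrt (W t))) := by ring
      have e2 : -(c₃ * lam / (2 * Real.sqrt c₂)) * ‖xt t‖ =
          -(lam * c₃ * ‖xt t‖ ^ 2 / (2 * (Real.sqrt c₂ * ‖xt t‖))) := by
        field_simp
      rw [e1, e2, neg_le_neg_iff]
      apply div_le_div_of_nonneg_left (by positivity) (by positivity)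
      linarith
    calc deriv V t + lam * (1 / (2 * Real.sqrt (W t)) * deriv W t)
        ≤ (-α t + A * γbar * ‖xt t‖) + (-(c₃ * lam / (2 * Real.sqrt c₂)) * ‖xt t‖) := by
          have := step1.trans step2; linarith
      _ = -α t - (c₃ * lam / (2 * Real.sqrt c₂) - A * γbar) * ‖xt t‖ := by ring
  refine ⟨key, ?_⟩
  intro hlam2
  refine ⟨c₃ * lam / (2 * Real.sqrt c₂) - A * γbar, ?_, fun t ht => (key t ht).2⟩
  rw [sub_pos, lt_div_iff₀ (by positivity)]
  rw [div_lt_iff₀ hc₃] at hlam2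
  linarith
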